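/- For fixed m with |m - m_*|r ≤ μ and noise-free data d = F[m_*]w_*, w_* ∈ W_μ, the misfit e[m, w_α[m;d]; d] converges to ‖d‖²/2 as α → ∞; i.e., in the large-penalty limit the extended inversion fits none of the data. -/

import Mathlib

open MeasureTheory Real Set Filter

/-- For fixed `m` with `|m - m_*| r ≤ μ` and noise-free data
`d = F[m_*]w_*`, `w_* ∈ W_μ`, the misfit `e[m, w_α[m;d]; d]` (here the
unnormalized misfit `½‖F[m]w_α - d‖²`) converges to `‖d‖²/2` as `α → ∞`:
in the large-penalty limit the extended inversion fits none of the data. -/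
theorem stmt_16 (r mmin mmax lammax tmin tmax mu mstar m : ℝ)
    (wstar : ℝ → ℝ)
    (hr : 0 < r) (hmmin : 0 < mmin) (hmm : mmin ≤ mmax) (hlammax : 0 < lammax)
    (ht : tmin < tmax)
    (hmu : 0 < mu) (hmu' : mu ≤ lammax)
    (hmstar : mstar ∈ Ioo mmin mmax) (hm : m ∈ Ioo mmin mmax)
    (hwstar : MemLp wstar 2 (volume : Measure ℝ))
    (hsupp : Function.support wstar ⊆ Icc (-mu) mu)
    (hnz : 0 < ∫ t, (wstar t) ^ 2)
    (hnear : |m - mstar| * r ≤ mu)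
    (hcont : Icc (mmin * r - lammax) (mmax * r + lammax) ⊆ Icc tmin tmax)
    (tau : ℝ)
    (htau : tau = max (max |tmin - mmin * r| |tmin - mmax * r|)
        (max |tmax - mmin * r| |tmax - mmax * r|))
    (a d : ℝ → ℝ)
    (ha : a = fun t => min |t| tau)
    (hd : d = fun t => wstar (t - mstar * r) / (4 * π * r))
    (walpha : ℝ → ℝ → ℝ)
    (hw : walpha = fun α t => (1 + (4 * π * r) ^ 2 * α ^ 2 * (a t) ^ 2)⁻¹
        * wstar (t + (m - mstar) * r)) :
    Tendsto (fun α : ℝ =>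
        (1 / 2) * ∫ t in Icc tmin tmax,
          (walpha α (t - m * r) / (4 * π * r) - d t) ^ 2)
      atTop (nhds ((1 / 2) * ∫ t in Icc tmin tmax, (d t) ^ 2)) := by
  have hπ := Real.pi_pos
  have hc : (0:ℝ) < 4 * π * r := by positivity
  have hK : (0:ℝ) < (4 * π * r) ^ 2 := by positivity
  -- tau > 0
  have htau1 : |tmin - mmin * r| ≤ tau := htau ▸ le_trans (le_max_left _ _) (le_max_left _ _)
  have htau2 : |tmax - mmin * r| ≤ tau := htau ▸ le_trans (le_max_left _ _) (le_max_right _ _)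
  have htaupos : 0 < tau := by
    have h1 := abs_le.mp htau1
    have h2 := abs_le.mp htau2
    linarith [h1.1, h1.2, h2.1, h2.2]
  -- rewrite the integrand
  have key : ∀ α t : ℝ, walpha α (t - m * r) / (4 * π * r) - d t =
      ((1 + (4 * π * r) ^ 2 * α ^ 2 * (a (t - m * r)) ^ 2)⁻¹ - 1) * d t := by
    intro α t
    rw [hw, hd]
    simp only
    have harg : t - m * r + (m - mstar) * r = t - mstar * r := by ring
    rw [harg]
    ring
  -- continuity of a
  have ha_cont : Continuous a := by rw [ha]; exact continuous_abs.min continuous_const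
  -- measurability of d
  have hd_meas : AEStronglyMeasurable d (volume : Measure ℝ) := by
    rw [hd]
    simp_rw [div_eq_mul_inv]
    exact (hwstar.1.comp_measurePreserving
      (measurePreserving_sub_right volume (mstar * r))).mul_const _
  -- integrability of bound
  have hbound_int : Integrable (fun t => d t ^ 2)
      ((volume : Measure ℝ).restrict (Icc tmin tmax)) := by
    have hsq : Integrable (fun t => wstar t ^ 2) (volume : Measure ℝ) := by
      have := hwstar.integrable_sq
      simpa [sq] using this
    have h1 : Integrable (fun t => wstar (t - mstar * r) ^ 2) (volume : Measure ℝ) :=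
      hsq.comp_sub_right (mstar * r)
    have h2 : Integrable (fun t => wstar (t - mstar * r) ^ 2 / (4 * π * r) ^ 2)
        (volume : Measure ℝ) := h1.div_const _
    have heq : (fun t => d t ^ 2) =
        fun t => wstar (t - mstar * r) ^ 2 / (4 * π * r) ^ 2 := by
      funext t; rw [hd]; field_simp
    rw [heq]
    exact h2.restrict
  refine Tendsto.const_mul (1 / 2 : ℝ) ?_
  refine tendsto_integral_filter_of_dominated_convergence (fun t => d t ^ 2)
    ?_ ?_ hbound_int ?_
  · -- measurability
    refine Filter.Eventually.of_forall fun α => ?_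
    have : (fun t => (walpha α (t - m * r) / (4 * π * r) - d t) ^ 2) =
        fun t => ((1 + (4 * π * r) ^ 2 * α ^ 2 * (a (t - m * r)) ^ 2)⁻¹ - 1) ^ 2 * d t ^ 2 := by
      funext t; rw [key]; ring
    rw [this]
    have hcont2 : Continuous fun t : ℝ =>
        ((1 + (4 * π * r) ^ 2 * α ^ 2 * (a (t - m * r)) ^ 2)⁻¹ - 1) ^ 2 := by
      have hpos : ∀ t : ℝ, (1 + (4 * π * r) ^ 2 * α ^ 2 * (a (t - m * r)) ^ 2) ≠ 0 := by
        intro t; positivity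
      exact (((continuous_const.add (continuous_const.mul
        ((ha_cont.comp (continuous_id.sub continuous_const)).pow 2))).inv₀ hpos).sub
        continuous_const).pow 2
    exact ((hcont2.aestronglyMeasurable).mul ((hd_meas.pow 2))).restrict
  · -- bound
    refine Filter.Eventually.of_forall fun α => Filter.Eventually.of_forall fun t => ?_
    rw [key]
    set x := (1 + (4 * π * r) ^ 2 * α ^ 2 * (a (t - m * r)) ^ 2)⁻¹ with hx
    have hx0 : 0 ≤ x := by positivity
    have hx1 : x ≤ 1 := by
      rw [hx]
      apply inv_le_one_of_one_le₀
      nlinarith [sq_nonneg (α * a (t - m * r))]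
    have h1 : ((x - 1) * d t) ^ 2 = (x - 1) ^ 2 * d t ^ 2 := by ring
    rw [Real.norm_eq_abs, abs_of_nonneg (sq_nonneg _), h1]
    have h2 : (x - 1) ^ 2 ≤ 1 := by nlinarith
    exact mul_le_of_le_one_left (sq_nonneg _) h2
  · -- pointwise limit
    have h0 : ∀ᵐ t : ℝ, t ≠ m * r := by
      have : (volume : Measure ℝ) {m * r} = 0 := measure_singleton _
      rw [ae_iff]
      simpa using this
    refine ae_restrict_of_ae ?_
    filter_upwards [h0] with t ht'
    have hs : 0 < a (t - m * r) := by
      rw [ha]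
      exact lt_min (abs_pos.mpr (sub_ne_zero.mpr ht')) htaupos
    set s := a (t - m * r) with hsdef
    have h1 : Tendsto (fun α : ℝ => (4 * π * r) ^ 2 * α ^ 2 * s ^ 2) atTop atTop := by
      have h2 : Tendsto (fun α : ℝ => α ^ 2) atTop atTop :=
        tendsto_pow_atTop (two_ne_zero)
      have h3 : (0:ℝ) < (4 * π * r) ^ 2 * s ^ 2 := by positivity
      have h4 := h2.const_mul_atTop h3
      refine h4.congr fun α => ?_
      ring
    have h5 : Tendsto (fun α : ℝ => 1 + (4 * π * r) ^ 2 * α ^ 2 * s ^ 2) atTop atTop :=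
      tendsto_atTop_add_const_left _ 1 h1
    have h6 : Tendsto (fun α : ℝ => (1 + (4 * π * r) ^ 2 * α ^ 2 * s ^ 2)⁻¹)
        atTop (nhds 0) := h5.inv_tendsto_atTop
    have h7 : Tendsto (fun α : ℝ =>
        ((1 + (4 * π * r) ^ 2 * α ^ 2 * s ^ 2)⁻¹ - 1) ^ 2 * d t ^ 2)
        atTop (nhds (((0:ℝ) - 1) ^ 2 * d t ^ 2)) :=
      (((h6.sub_const 1).pow 2).mul_const _)
    have h8 : ((0:ℝ) - 1) ^ 2 * d t ^ 2 = d t ^ 2 := by ring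
    rw [h8] at h7
    refine h7.congr fun α => ?_
    rw [key]
    ring
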